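/- Let G be a connected simple graph on a finite vertex set of N ≥ 2 vertices and let s ≥ 0 be a real number. Then (N·I − J) − L̃_Mell(s) is positive semidefinite, where N·I − J is the Laplacian of the complete graph on N vertices; consequently every eigenvalue of L̃_Mell(s) lies in the interval [0, N]. -/

import Mathlib

open Finset Matrix Filter Real Topology

/-- The `d`-path Laplacian matrix of a graph `G` on `Fin N`:
`(L_d)_{ii} = #{j : dist(i,j) = d}`, `(L_d)_{ij} = -1` if `i ≠ j` and `dist(i,j) = d`,
and `0` otherwise. -/
noncomputable def pathLaplacian {N : ℕ} (G : SimpleGraph (Fin N)) (d : ℕ) :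
    Matrix (Fin N) (Fin N) ℝ := fun i j =>
  if i = j then ((univ.filter fun k => G.dist i k = d).card : ℝ)
  else if G.dist i j = d then -1 else 0

/-- The diameter `d_max` of `G`: the maximum shortest-path distance over all pairs. -/
noncomputable def graphDiam {N : ℕ} (G : SimpleGraph (Fin N)) : ℕ :=
  univ.sup fun p : Fin N × Fin N => G.dist p.1 p.2

/-- The Mellin-transformed path Laplacian `L̃_Mell(s) = Σ_{d=1}^{d_max} d^{-s} L_d`. -/
noncomputable def mellinLap {N : ℕ} (G : SimpleGraph (Fin N)) (s : ℝ) :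
    Matrix (Fin N) (Fin N) ℝ :=
  ∑ d ∈ Icc 1 (graphDiam G), (d : ℝ) ^ (-s) • pathLaplacian G d

/-- The Laplace-transformed path Laplacian `L̃_Lapl(λ) = L_1 + Σ_{d=2}^{d_max} e^{-λd} L_d`. -/
noncomputable def laplaceLap {N : ℕ} (G : SimpleGraph (Fin N)) (lam : ℝ) :
    Matrix (Fin N) (Fin N) ℝ :=
  pathLaplacian G 1 + ∑ d ∈ Icc 2 (graphDiam G), Real.exp (-(lam * d)) • pathLaplacian G d

/-- `λ₂(M)`: infimum of the quadratic form over Euclidean-unit vectors orthogonal to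
the all-ones vector. -/
noncomputable def lamTwo {N : ℕ} (M : Matrix (Fin N) (Fin N) ℝ) : ℝ :=
  sInf {r | ∃ x : Fin N → ℝ, ∑ i, x i ^ 2 = 1 ∧ ∑ i, x i = 0 ∧ r = x ⬝ᵥ M.mulVec x}

/-- `λ_max(M)`: supremum of the quadratic form over Euclidean-unit vectors. -/
noncomputable def lamMax {N : ℕ} (M : Matrix (Fin N) (Fin N) ℝ) : ℝ :=
  sSup {r | ∃ x : Fin N → ℝ, ∑ i, x i ^ 2 = 1 ∧ r = x ⬝ᵥ M.mulVec x}

/-! ### Auxiliary lemmas -/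

section Aux

variable {N : ℕ}

/-- Quadratic form of the `d`-path Laplacian, `d ≥ 1`. -/
private lemma sum_mulVec' {N : ℕ} (s : Finset ℕ) (f : ℕ → Matrix (Fin N) (Fin N) ℝ)
    (v : Fin N → ℝ) : (∑ d ∈ s, f d) *ᵥ v = ∑ d ∈ s, (f d) *ᵥ v := by
  induction s using Finset.induction with
  | empty => simp
  | insert _ _ h ih => rw [Finset.sum_insert h, Finset.sum_insert h, Matrix.add_mulVec, ih]

private lemma dotProduct_sum' {N : ℕ} (s : Finset ℕ) (v : Fin N → ℝ)
    (f : ℕ → Fin N → ℝ) : v ⬝ᵥ (∑ d ∈ s, f d) = ∑ d ∈ s, v ⬝ᵥ f d := by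
  induction s using Finset.induction with
  | empty => simp
  | insert _ _ h ih => rw [Finset.sum_insert h, Finset.sum_insert h, dotProduct_add, ih]

lemma pathLap_quad (G : SimpleGraph (Fin N)) {d : ℕ} (hd : 1 ≤ d) (x : Fin N → ℝ) :
    x ⬝ᵥ (pathLaplacian G d) *ᵥ x
      = ∑ i, ∑ j, (if G.dist i j = d then x i * (x i - x j) else 0) := by
  have hdd : ∀ i : Fin N, ¬ (G.dist i i = d) := fun i => by
    simp only [SimpleGraph.dist_self]; omega
  simp only [dotProduct, mulVec, dotProduct]
  refine Finset.sum_congr rfl fun i _ => ?_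
  have hcard : ((univ.filter fun k => G.dist i k = d).card : ℝ)
      = ∑ j, (if G.dist i j = d then (1 : ℝ) else 0) := by
    rw [Finset.sum_boole]
  calc x i * ∑ j, pathLaplacian G d i j * x j
      = ∑ j, x i * (pathLaplacian G d i j * x j) := by rw [Finset.mul_sum]
    _ = ∑ j, ((if j = i then ((univ.filter fun k => G.dist i k = d).card : ℝ) * (x i * x i)
          else 0) + (if G.dist i j = d then -(x i * x j) else 0)) := by
        refine Finset.sum_congr rfl fun j _ => ?_
        unfold pathLaplacian
        by_cases h : i = j
        · subst h
          rw [if_pos rfl, if_pos rfl, if_neg (hdd i)]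
          ring
        · have h' : ¬ j = i := fun hh => h hh.symm
          by_cases h2 : G.dist i j = d
          · simp only [if_neg h, if_neg h', if_pos h2]
            ring
          · simp only [if_neg h, if_neg h', if_neg h2]
            ring
    _ = ((univ.filter fun k => G.dist i k = d).card : ℝ) * (x i * x i)
          + ∑ j, (if G.dist i j = d then -(x i * x j) else 0) := by
        rw [Finset.sum_add_distrib, Finset.sum_ite_eq' univ i
          (fun _ => ((univ.filter fun k => G.dist i k = d).card : ℝ) * (x i * x i))]
        simp
    _ = ∑ j, (if G.dist i j = d then x i * (x i - x j) else 0) := by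
        rw [hcard, Finset.sum_mul, ← Finset.sum_add_distrib]
        refine Finset.sum_congr rfl fun j _ => ?_
        by_cases h2 : G.dist i j = d
        · rw [if_pos h2, if_pos h2, if_pos h2]; ring
        · rw [if_neg h2, if_neg h2, if_neg h2]; ring

/-- Quadratic form of the Mellin path Laplacian. -/
lemma mellin_quad (G : SimpleGraph (Fin N)) (hG : G.Connected) (s : ℝ) (x : Fin N → ℝ) :
    x ⬝ᵥ (mellinLap G s) *ᵥ x
      = ∑ i, ∑ j, (if i = j then 0 else ((G.dist i j : ℝ) ^ (-s))) * (x i * (x i - x j)) := by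
  unfold mellinLap
  rw [sum_mulVec', dotProduct_sum']
  have step1 : ∀ d ∈ Icc 1 (graphDiam G),
      x ⬝ᵥ ((d : ℝ) ^ (-s) • pathLaplacian G d) *ᵥ x
        = ∑ i, ∑ j, (if G.dist i j = d then ((d : ℝ) ^ (-s)) * (x i * (x i - x j)) else 0) := by
    intro d hdmem
    rw [Matrix.smul_mulVec, dotProduct_smul, smul_eq_mul,
      pathLap_quad G (Finset.mem_Icc.mp hdmem).1 x, Finset.mul_sum]
    refine Finset.sum_congr rfl fun i _ => ?_
    rw [Finset.mul_sum]
    refine Finset.sum_congr rfl fun j _ => ?_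
    by_cases h2 : G.dist i j = d
    · rw [if_pos h2, if_pos h2]
    · rw [if_neg h2, if_neg h2, mul_zero]
  rw [Finset.sum_congr rfl step1]
  rw [Finset.sum_comm]
  refine Finset.sum_congr rfl fun i _ => ?_
  rw [Finset.sum_comm]
  refine Finset.sum_congr rfl fun j _ => ?_
  by_cases hij : i = j
  · subst hij
    rw [if_pos rfl, zero_mul]
    refine Finset.sum_eq_zero fun d hdmem => ?_
    rw [if_neg]
    simp only [SimpleGraph.dist_self]
    have := (Finset.mem_Icc.mp hdmem).1; omega
  · rw [if_neg hij]
    have hmem : G.dist i j ∈ Icc 1 (graphDiam G) := by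
      refine Finset.mem_Icc.mpr ⟨hG.pos_dist_of_ne hij, ?_⟩
      exact Finset.le_sup (f := fun p : Fin N × Fin N => G.dist p.1 p.2)
        (Finset.mem_univ (i, j))
    have hrw : ∀ d ∈ Icc 1 (graphDiam G),
        (if G.dist i j = d then ((d : ℝ) ^ (-s)) * (x i * (x i - x j)) else 0)
          = (if d = G.dist i j then ((d : ℝ) ^ (-s)) * (x i * (x i - x j)) else 0) := by
      intro d _
      by_cases h : G.dist i j = d
      · rw [if_pos h, if_pos h.symm]
      · rw [if_neg h, if_neg (fun h' => h h'.symm)]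
    rw [Finset.sum_congr rfl hrw,
      Finset.sum_ite_eq' (Icc 1 (graphDiam G)) (G.dist i j)
        (fun d => ((d : ℝ) ^ (-s)) * (x i * (x i - x j))), if_pos hmem]

/-- Quadratic form of the complete-graph Laplacian `N·I − J`. -/
lemma complete_quad (x : Fin N → ℝ) :
    x ⬝ᵥ ((((N : ℝ) • (1 : Matrix (Fin N) (Fin N) ℝ)) - Matrix.of (fun _ _ => (1 : ℝ))) *ᵥ x)
      = ∑ i, ∑ j, (if i = j then 0 else (1 : ℝ)) * (x i * (x i - x j)) := by
  rw [Matrix.sub_mulVec, dotProduct_sub]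
  simp only [dotProduct, mulVec, dotProduct, Matrix.smul_apply, Matrix.one_apply,
    Matrix.of_apply, smul_eq_mul]
  rw [← Finset.sum_sub_distrib]
  refine Finset.sum_congr rfl fun i _ => ?_
  have h1 : ∑ j, ((N : ℝ) * (if i = j then 1 else 0)) * x j = (N : ℝ) * x i := by
    rw [Finset.sum_eq_single i]
    · rw [if_pos rfl]; ring
    · intro j _ hj
      rw [if_neg (fun h => hj h.symm)]; ring
    · intro h; exact absurd (Finset.mem_univ i) h
  have h2 : ∑ j, (if i = j then 0 else (1 : ℝ)) * (x i * (x i - x j))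
      = ∑ j, (x i * (x i - x j)) := by
    refine Finset.sum_congr rfl fun j _ => ?_
    by_cases h : i = j
    · subst h; rw [if_pos rfl]; ring
    · rw [if_neg h]; ring
  have h3 : ∑ j, (x i * (x i - x j)) = (N : ℝ) * (x i * x i) - x i * ∑ j, x j := by
    simp only [mul_sub, Finset.sum_sub_distrib, Finset.sum_const, Finset.card_univ,
      Fintype.card_fin, nsmul_eq_mul, Finset.mul_sum]
  rw [h1, h2, h3]
  ring

/-- Symmetrization: a quadratic form with symmetric nonnegative weights is nonnegative. -/
lemma sym_sum_nonneg (w : Fin N → Fin N → ℝ) (hsym : ∀ i j, w i j = w j i)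
    (hw : ∀ i j, 0 ≤ w i j) (x : Fin N → ℝ) :
    0 ≤ ∑ i, ∑ j, w i j * (x i * (x i - x j)) := by
  have hswap : ∑ i, ∑ j, w i j * (x i * (x i - x j))
      = ∑ i, ∑ j, w i j * (x j * (x j - x i)) := by
    rw [Finset.sum_comm]
    refine Finset.sum_congr rfl fun i _ => Finset.sum_congr rfl fun j _ => ?_
    rw [hsym i j]
  have h2 : (2 : ℝ) * ∑ i, ∑ j, w i j * (x i * (x i - x j))
      = ∑ i, ∑ j, w i j * (x i - x j) ^ 2 := by
    rw [two_mul]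
    nth_rewrite 2 [hswap]
    rw [← Finset.sum_add_distrib]
    refine Finset.sum_congr rfl fun i _ => ?_
    rw [← Finset.sum_add_distrib]
    refine Finset.sum_congr rfl fun j _ => ?_
    ring
  have hnn : 0 ≤ ∑ i, ∑ j, w i j * (x i - x j) ^ 2 :=
    Finset.sum_nonneg fun i _ => Finset.sum_nonneg fun j _ =>
      mul_nonneg (hw i j) (sq_nonneg _)
  linarith

/-- The Mellin path Laplacian is symmetric. -/
lemma mellin_symm (G : SimpleGraph (Fin N)) (s : ℝ) :
    (mellinLap G s).IsHermitian := by
  have hpath : ∀ d (i j : Fin N), pathLaplacian G d i j = pathLaplacian G d j i := by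
    intro d i j
    unfold pathLaplacian
    by_cases h : i = j
    · subst h; rfl
    · have h' : ¬ j = i := fun hh => h hh.symm
      rw [if_neg h, if_neg h', SimpleGraph.dist_comm]
  show (mellinLap G s)ᴴ = mellinLap G s
  ext i j
  rw [Matrix.conjTranspose_apply, star_trivial]
  unfold mellinLap
  simp only [Matrix.sum_apply, Matrix.smul_apply, smul_eq_mul]
  exact Finset.sum_congr rfl fun d _ => by rw [hpath d j i]

end Aux

/-- For `s ≥ 0`, `(N·I − J) − L̃_Mell(s)` is positive semidefinite, and
consequently every eigenvalue of `L̃_Mell(s)` lies in `[0, N]`. -/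
theorem complete_sub_mellinLap_posSemidef {N : ℕ} (G : SimpleGraph (Fin N))
    (hG : G.Connected) (hN : 2 ≤ N) (s : ℝ) (hs : 0 ≤ s) :
    ((N : ℝ) • (1 : Matrix (Fin N) (Fin N) ℝ) - Matrix.of (fun _ _ => (1 : ℝ)) -
        mellinLap G s).PosSemidef ∧
      ∀ μ : ℝ, Module.End.HasEigenvalue (Matrix.toLin' (mellinLap G s)) μ →
        μ ∈ Set.Icc (0 : ℝ) (N : ℝ) := by
  set A : Matrix (Fin N) (Fin N) ℝ :=
    (N : ℝ) • (1 : Matrix (Fin N) (Fin N) ℝ) - Matrix.of (fun _ _ => (1 : ℝ)) with hA_def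
  -- weights
  set ws : Fin N → Fin N → ℝ := fun i j => if i = j then 0 else ((G.dist i j : ℝ) ^ (-s))
    with hws_def
  have hws_sym : ∀ i j, ws i j = ws j i := by
    intro i j
    by_cases h : i = j
    · subst h; rfl
    · simp only [hws_def, if_neg h, if_neg (fun h' : j = i => h h'.symm),
        SimpleGraph.dist_comm]
  have hws_nonneg : ∀ i j, 0 ≤ ws i j := by
    intro i j
    by_cases h : i = j
    · simp [hws_def, h]
    · simp only [hws_def, if_neg h]
      exact Real.rpow_nonneg (Nat.cast_nonneg _) _
  have hws_le_one : ∀ i j, i ≠ j → ws i j ≤ 1 := by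
    intro i j h
    simp only [hws_def, if_neg h]
    have h1 : (1 : ℝ) ≤ (G.dist i j : ℝ) := by
      exact_mod_cast hG.pos_dist_of_ne h
    exact Real.rpow_le_one_of_one_le_of_nonpos h1 (neg_nonpos.mpr hs)
  -- Hermitian facts
  have hAherm : A.IsHermitian := by
    show Aᴴ = A
    ext i j
    simp only [hA_def, Matrix.conjTranspose_apply, Matrix.sub_apply, Matrix.smul_apply,
      Matrix.one_apply, Matrix.of_apply, smul_eq_mul, star_trivial]
    by_cases h : i = j
    · subst h; rfl
    · rw [if_neg h, if_neg (fun h' : j = i => h h'.symm)]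
  -- quadratic forms
  have hquadM : ∀ x : Fin N → ℝ,
      x ⬝ᵥ (mellinLap G s) *ᵥ x = ∑ i, ∑ j, ws i j * (x i * (x i - x j)) :=
    fun x => mellin_quad G hG s x
  have hquadD : ∀ x : Fin N → ℝ,
      x ⬝ᵥ (A - mellinLap G s) *ᵥ x
        = ∑ i, ∑ j, ((if i = j then 0 else (1 : ℝ)) - ws i j) * (x i * (x i - x j)) := by
    intro x
    rw [Matrix.sub_mulVec, dotProduct_sub, complete_quad x, hquadM x,
      ← Finset.sum_sub_distrib]
    refine Finset.sum_congr rfl fun i _ => ?_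
    rw [← Finset.sum_sub_distrib]
    refine Finset.sum_congr rfl fun j _ => ?_
    ring
  have hstar : ∀ x : Fin N → ℝ, star x = x := fun x => funext fun i => star_trivial _
  -- PSD of the difference
  have hPSD : (A - mellinLap G s).PosSemidef := by
    refine Matrix.posSemidef_iff_dotProduct_mulVec.mpr ⟨hAherm.sub (mellin_symm G s), fun x => ?_⟩
    rw [hstar x, hquadD x]
    refine sym_sum_nonneg _ ?_ ?_ x
    · intro i j
      by_cases h : i = j
      · subst h; rw [hws_sym]
      · rw [if_neg h, if_neg (fun h' : j = i => h h'.symm), hws_sym]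
    · intro i j
      by_cases h : i = j
      · subst h
        simp [hws_def]
      · rw [if_neg h, sub_nonneg]
        exact hws_le_one i j h
  -- PSD of the Mellin Laplacian itself
  have hPSDM : (mellinLap G s).PosSemidef := by
    refine Matrix.posSemidef_iff_dotProduct_mulVec.mpr ⟨mellin_symm G s, fun x => ?_⟩
    rw [hstar x, hquadM x]
    exact sym_sum_nonneg _ hws_sym hws_nonneg x
  refine ⟨hPSD, fun μ hμ => ?_⟩
  obtain ⟨v, hv⟩ := hμ.exists_hasEigenvector
  have hv1 : Matrix.toLin' (mellinLap G s) v = μ • v := hv.apply_eq_smul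
  have hmv : (mellinLap G s) *ᵥ v = μ • v := by
    rwa [Matrix.toLin'_apply] at hv1
  have hquadv : v ⬝ᵥ (mellinLap G s) *ᵥ v = μ * (v ⬝ᵥ v) := by
    rw [hmv, dotProduct_smul, smul_eq_mul]
  have hvv : 0 < v ⬝ᵥ v := by
    have h0 : v ⬝ᵥ v ≠ 0 := fun h => hv.2 (dotProduct_self_eq_zero.mp h)
    have hnn : 0 ≤ v ⬝ᵥ v := Finset.sum_nonneg fun i _ => mul_self_nonneg _
    exact lt_of_le_of_ne hnn (Ne.symm h0)
  constructor
  · -- 0 ≤ μ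
    have h1 : 0 ≤ v ⬝ᵥ (mellinLap G s) *ᵥ v := by
      have := hPSDM.dotProduct_mulVec_nonneg v
      rwa [hstar v] at this
    rw [hquadv] at h1
    nlinarith
  · -- μ ≤ N
    have h1 : 0 ≤ v ⬝ᵥ (A - mellinLap G s) *ᵥ v := by
      have := hPSD.dotProduct_mulVec_nonneg v
      rwa [hstar v] at this
    rw [Matrix.sub_mulVec, dotProduct_sub, hquadv] at h1
    have hAle : v ⬝ᵥ (A *ᵥ v) ≤ (N : ℝ) * (v ⬝ᵥ v) := by
      have hJ : v ⬝ᵥ ((Matrix.of fun _ _ => (1 : ℝ)) *ᵥ v) = (∑ i, v i) ^ 2 := by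
        simp only [mulVec, dotProduct, Matrix.of_apply, one_mul, sq]
        rw [← Finset.sum_mul]
      rw [hA_def, Matrix.sub_mulVec, dotProduct_sub, Matrix.smul_mulVec,
        Matrix.one_mulVec, dotProduct_smul, smul_eq_mul, hJ]
      nlinarith [sq_nonneg (∑ i, v i)]
    have := le_trans (by linarith : μ * (v ⬝ᵥ v) ≤ v ⬝ᵥ (A *ᵥ v)) hAle
    exact le_of_mul_le_mul_right (by linarith) hvv
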